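/- arXiv:2011.03458 — 2 statements merged into one kernel-verified Lean document; each statement's English description precedes it below -/
import Mathlib

section
/- Let n : ℕ and let I ∈ MvPolynomial (Fin (n+1)) ℚ. Then I is a semi-invariant of the binary n-form, i.e. φ(I) = ι(I), if and only if D(I) = 0. -/
open MvPolynomial

/-- The operator `D(I) = Σ_{i=1}^{n} i · a_{i-1} · ∂I/∂a_i`. -/
noncomputable def Dop (n : ℕ) :
    MvPolynomial (Fin (n+1)) ℚ →ₗ[ℚ] MvPolynomial (Fin (n+1)) ℚ :=
  ∑ i : Fin n, ((i : ℚ) + 1) •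
    ((LinearMap.mulLeft ℚ (X i.castSucc)).comp (pderiv i.succ).toLinearMap)

/-- The operator `Δ(I) = Σ_{i=0}^{n-1} (n-i) · a_{i+1} · ∂I/∂a_i`. -/
noncomputable def Δop (n : ℕ) :
    MvPolynomial (Fin (n+1)) ℚ →ₗ[ℚ] MvPolynomial (Fin (n+1)) ℚ :=
  ∑ i : Fin n, ((n : ℚ) - (i : ℚ)) •
    ((LinearMap.mulLeft ℚ (X i.succ)).comp (pderiv i.castSucc).toLinearMap)

/-- `Q_n(k,m)`: span of monomials of degree `k` and weight `m`. -/
noncomputable def Qspace (n k m : ℕ) : Submodule ℚ (MvPolynomial (Fin (n+1)) ℚ) :=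
  Submodule.span ℚ { p | ∃ ν : Fin (n+1) →₀ ℕ,
    (∑ i : Fin (n+1), ν i) = k ∧ (∑ i : Fin (n+1), (i : ℕ) * ν i) = m ∧ p = monomial ν (1 : ℚ) }

/-- `S_n(k,m)`: semi-invariants of degree `k` and weight `m`. -/
noncomputable def Sspace (n k m : ℕ) : Submodule ℚ (MvPolynomial (Fin (n+1)) ℚ) :=
  Qspace n k m ⊓ LinearMap.ker (Dop n)

/-- `p(k,n,m)`: number of partitions of `m` in a `k × n` rectangle. -/
def pRect (k n m : ℕ) : ℕ :=
  (Finset.univ.filter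
    (fun P : Nat.Partition m => Multiset.card P.parts ≤ k ∧ ∀ x ∈ P.parts, x ≤ n)).card

/-- Coefficient embedding `ℚ[a] → ℚ[z][a]`. -/
noncomputable def ιmap (n : ℕ) :
    MvPolynomial (Fin (n+1)) ℚ →+* MvPolynomial (Fin (n+1)) (Polynomial ℚ) :=
  MvPolynomial.map (Polynomial.C)

/-- The shear substitution `a_i ↦ a_i' = Σ_{j=0}^{i} C(i,j) a_{i-j} z^j`. -/
noncomputable def φmap (n : ℕ) :
    MvPolynomial (Fin (n+1)) ℚ →ₐ[ℚ] MvPolynomial (Fin (n+1)) (Polynomial ℚ) :=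
  aeval (fun i : Fin (n+1) => ∑ j ∈ Finset.range ((i : ℕ) + 1),
    (C ((Nat.choose (i : ℕ) j : Polynomial ℚ) * Polynomial.X ^ j)) *
      X (⟨(i : ℕ) - j, Nat.lt_of_le_of_lt (Nat.sub_le _ _) i.isLt⟩ : Fin (n+1)))

/-- The vertical shear substitution `a_i ↦ a_i'' = Σ_{j=0}^{n-i} C(n-i,j) a_{i+j} z^j`. -/
noncomputable def ψmap (n : ℕ) :
    MvPolynomial (Fin (n+1)) ℚ →ₐ[ℚ] MvPolynomial (Fin (n+1)) (Polynomial ℚ) :=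
  aeval (fun i : Fin (n+1) => ∑ j ∈ (Finset.range (n - (i : ℕ) + 1)).attach,
    (C ((Nat.choose (n - (i : ℕ)) j.1 : Polynomial ℚ) * Polynomial.X ^ j.1)) *
      X (⟨(i : ℕ) + j.1, by
        have h1 := Finset.mem_range.mp j.2
        have h2 := i.isLt
        omega⟩ : Fin (n+1)))

/-- The weighted total degree of `I`: max of `Σ_i i·ν_i` over monomials of `I`. -/
def wdeg (n : ℕ) (I : MvPolynomial (Fin (n+1)) ℚ) : ℕ :=
  I.support.sup (fun ν => ∑ i : Fin (n+1), (i : ℕ) * ν i)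

noncomputable def Dz (σ : Type) : MvPolynomial σ (Polynomial ℚ) →ₗ[ℚ] MvPolynomial σ (Polynomial ℚ) :=
  (AddMonoidAlgebra.coeffLinearEquiv ℚ).symm.toLinearMap ∘ₗ
    Finsupp.mapRange.linearMap (Polynomial.derivative : Polynomial ℚ →ₗ[ℚ] Polynomial ℚ) ∘ₗ
    (AddMonoidAlgebra.coeffLinearEquiv ℚ).toLinearMap

theorem coeff_Dz (σ : Type) (ν : σ →₀ ℕ) (x : MvPolynomial σ (Polynomial ℚ)) :
    coeff ν (Dz σ x) = Polynomial.derivative (coeff ν x) := rfl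

theorem Dz_monomial (σ : Type) [DecidableEq σ] (ν : σ →₀ ℕ) (p : Polynomial ℚ) :
    Dz σ (monomial ν p) = monomial ν (Polynomial.derivative p) := by
  ext μ
  rw [coeff_Dz, MvPolynomial.coeff_monomial, MvPolynomial.coeff_monomial]
  split <;> simp

theorem Dz_mul (σ : Type) [DecidableEq σ] (a b : MvPolynomial σ (Polynomial ℚ)) :
    Dz σ (a * b) = Dz σ a * b + a * Dz σ b := by
  induction a using MvPolynomial.induction_on' with
  | monomial ν p =>
    induction b using MvPolynomial.induction_on' with
    | monomial μ q =>
      rw [monomial_mul, Dz_monomial, Dz_monomial, Dz_monomial, Polynomial.derivative_mul,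
        map_add, monomial_mul, monomial_mul]
    | add b c hb hc =>
      rw [mul_add, map_add, hb, hc, map_add]; ring
  | add a c ha hc =>
    rw [add_mul, map_add, ha, hc, map_add]; ring

theorem Dz_C (σ : Type) [DecidableEq σ] (p : Polynomial ℚ) :
    Dz σ (MvPolynomial.C p) = MvPolynomial.C (Polynomial.derivative p) := by
  rw [MvPolynomial.C_apply, MvPolynomial.C_apply]
  exact Dz_monomial σ 0 p

theorem Dz_X (σ : Type) [DecidableEq σ] (i : σ) : Dz σ (X i : MvPolynomial σ (Polynomial ℚ)) = 0 := by
  have : (MvPolynomial.X i : MvPolynomial σ (Polynomial ℚ)) = monomial (Finsupp.single i 1) 1 := rfl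
  rw [this, Dz_monomial]; simp

noncomputable def ιg (σ : Type) : MvPolynomial σ ℚ →+* MvPolynomial σ (Polynomial ℚ) :=
  MvPolynomial.map (Polynomial.C)

theorem Dz_iota (σ : Type) (x : MvPolynomial σ ℚ) : Dz σ (ιg σ x) = 0 := by
  ext μ
  rw [coeff_Dz, MvPolynomial.coeff_zero, ιg, MvPolynomial.coeff_map]
  simp

noncomputable def ev0 (σ : Type) : MvPolynomial σ (Polynomial ℚ) →+* MvPolynomial σ ℚ :=
  MvPolynomial.map (Polynomial.evalRingHom 0)

theorem eq_iota_ev0_of_Dz_eq_zero (σ : Type) (x : MvPolynomial σ (Polynomial ℚ))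
    (h : Dz σ x = 0) : x = ιg σ (ev0 σ x) := by
  ext μ k
  have h1 : Polynomial.derivative (coeff μ x) = 0 := by
    rw [← coeff_Dz, h, MvPolynomial.coeff_zero]
  have h2 : (coeff μ x).natDegree = 0 := Polynomial.natDegree_eq_zero_of_derivative_eq_zero h1
  rw [ιg, MvPolynomial.coeff_map, ev0, MvPolynomial.coeff_map]
  conv_lhs => rw [Polynomial.eq_C_of_natDegree_eq_zero h2]
  simp only [Polynomial.coeff_C]
  split
  · next hk => subst hk; rw [Polynomial.eq_C_of_natDegree_eq_zero h2]; simp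
  · rfl

theorem Dop_mul (n : ℕ) (p q : MvPolynomial (Fin (n+1)) ℚ) :
    Dop n (p * q) = Dop n p * q + p * Dop n q := by
  simp only [Dop, LinearMap.sum_apply, LinearMap.smul_apply, LinearMap.coe_comp,
    Function.comp_apply, Derivation.coeFn_coe, LinearMap.mulLeft_apply, pderiv_mul,
    MvPolynomial.smul_eq_C_mul, Finset.sum_mul, Finset.mul_sum, ← Finset.sum_add_distrib]
  apply Finset.sum_congr rfl; intros; ring

theorem Dop_X_succ (n : ℕ) (i : Fin n) :
    Dop n (X i.succ) = ((i : ℚ) + 1) • X i.castSucc := by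
  simp only [Dop, LinearMap.sum_apply, LinearMap.smul_apply, LinearMap.coe_comp,
    Function.comp_apply, Derivation.coeFn_coe, LinearMap.mulLeft_apply]
  rw [Finset.sum_eq_single i]
  · rw [pderiv_X_self, mul_one]
  · intro b _ hb
    rw [pderiv_X_of_ne (fun h => hb (Fin.succ_injective _ h).symm), mul_zero, smul_zero]
  · exact fun h => absurd (Finset.mem_univ i) h

theorem Dop_X_zero (n : ℕ) (j : Fin (n+1)) (hj : (j : ℕ) = 0) : Dop n (X j) = 0 := by
  simp only [Dop, LinearMap.sum_apply, LinearMap.smul_apply, LinearMap.coe_comp,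
    Function.comp_apply, Derivation.coeFn_coe, LinearMap.mulLeft_apply]
  apply Finset.sum_eq_zero
  intro i _
  rw [pderiv_X_of_ne (fun h => by rw [h] at hj; simp at hj), mul_zero, smul_zero]

theorem ev0_phi_X (n : ℕ) (j : Fin (n+1)) : ev0 _ (φmap n (X j)) = X j := by
  rw [φmap, MvPolynomial.aeval_X, map_sum, Finset.sum_eq_single 0]
  · simp [ev0]
  · intro k _ hk0
    simp [ev0, hk0, zero_pow]
  · intro h; exact absurd (Finset.mem_range.mpr (by omega)) h

theorem ev0_phi (n : ℕ) (I : MvPolynomial (Fin (n+1)) ℚ) : ev0 _ (φmap n I) = I := by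
  induction I using MvPolynomial.induction_on with
  | C q => simp [ev0, φmap, MvPolynomial.aeval_C]
  | add p q hp hq => rw [map_add, map_add, hp, hq]
  | mul_X p j ih => rw [map_mul, map_mul, ih, ev0_phi_X]

lemma ratsmul (σ : Type) (q : ℚ) (x : MvPolynomial σ (Polynomial ℚ)) :
    q • x = MvPolynomial.C (Polynomial.C q) * x := by
  rw [← algebraMap_smul (Polynomial ℚ) q x, MvPolynomial.smul_eq_C_mul]
  norm_num

lemma Dz_C_mul_X (σ : Type) [DecidableEq σ] (c : Polynomial ℚ) (m : σ) :
    Dz σ (MvPolynomial.C c * X m) = MvPolynomial.C (Polynomial.derivative c) * X m := by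
  rw [Dz_mul, Dz_C, Dz_X, mul_zero, add_zero]

theorem Dz_phi_X (n : ℕ) (j : Fin (n+1)) :
    Dz _ (φmap n (X j)) = φmap n (Dop n (X j)) := by
  by_cases h0 : (j : ℕ) = 0
  · rw [Dop_X_zero n j h0, map_zero, φmap, MvPolynomial.aeval_X, map_sum]
    rw [Finset.sum_eq_single 0]
    · rw [Dz_C_mul_X]; simp
    · intro k hk hk0
      exfalso; rw [Finset.mem_range, h0] at hk; omega
    · intro h; exact absurd (Finset.mem_range.mpr (by omega)) h
  · obtain ⟨m, hm⟩ : ∃ m, (j : ℕ) = m + 1 := ⟨(j:ℕ) - 1, by omega⟩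
    have hmn : m < n := by have := j.isLt; omega
    have hj : j = (⟨m, hmn⟩ : Fin n).succ := Fin.ext (by simp [hm])
    rw [hj, Dop_X_succ, map_smul, φmap, MvPolynomial.aeval_X, MvPolynomial.aeval_X, map_sum]
    simp only [Dz_C_mul_X, Fin.val_succ, Fin.coe_castSucc]
    rw [Finset.sum_range_succ', ratsmul, Finset.mul_sum]
    simp only [Nat.succ_sub_succ_eq_sub, Nat.choose_zero_right, Nat.cast_one, pow_zero,
      mul_one, Polynomial.derivative_one, map_zero, zero_mul, add_zero]
    apply Finset.sum_congr rfl
    intro k hk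
    rw [← mul_assoc, ← map_mul]
    congr 2
    have h := Nat.add_one_mul_choose_eq m k
    rw [Polynomial.derivative_mul, Polynomial.derivative_natCast, zero_mul, zero_add,
      Polynomial.derivative_X_pow]
    simp only [Nat.add_sub_cancel, Polynomial.C_eq_natCast]
    have hC : (Polynomial.C ((m:ℚ) + 1) : Polynomial ℚ) = ((m+1 : ℕ) : Polynomial ℚ) := by
      push_cast; simp
    rw [hC, ← mul_assoc, ← mul_assoc, ← Nat.cast_mul, ← Nat.cast_mul]
    have h2 : (m + 1).choose (k + 1) * (k + 1) = (m + 1) * m.choose k := h.symm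
    rw [h2]

theorem Dz_phi (n : ℕ) (I : MvPolynomial (Fin (n+1)) ℚ) :
    Dz _ (φmap n I) = φmap n (Dop n I) := by
  induction I using MvPolynomial.induction_on with
  | C q =>
    have h1 : φmap n (MvPolynomial.C q) = MvPolynomial.C (Polynomial.C q) := by
      rw [φmap, MvPolynomial.aeval_C]; rfl
    have h2 : Dop n (MvPolynomial.C q) = 0 := by
      simp [Dop, pderiv_C]
    rw [h1, h2, map_zero, Dz_C, Polynomial.derivative_C, map_zero]
  | add p q hp hq => rw [map_add, map_add, hp, hq, map_add, map_add]
  | mul_X p j ih =>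
    rw [map_mul, Dz_mul, ih, Dz_phi_X, Dop_mul, map_add, map_mul, map_mul]

/-- `I` is a semi-invariant iff `D(I) = 0`. -/
theorem semiInvariant_iff_D_eq_zero (n : ℕ) (I : MvPolynomial (Fin (n+1)) ℚ) :
    φmap n I = ιmap n I ↔ Dop n I = 0 := by
  constructor
  · intro h
    have h2 : φmap n (Dop n I) = 0 := by
      rw [← Dz_phi, h]; exact Dz_iota _ I
    have h3 := ev0_phi n (Dop n I)
    rw [h2, map_zero] at h3
    exact h3.symm
  · intro h
    have h2 : Dz _ (φmap n I) = 0 := by rw [Dz_phi, h, map_zero]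
    have h3 := eq_iota_ev0_of_Dz_eq_zero _ _ h2
    rw [ev0_phi] at h3
    exact h3
end

section
/- Let n, k : ℕ and let m : ℕ satisfy 1 ≤ m and 2m ≤ nk. Then the operator D maps Q_n(k,m) onto Q_n(k,m−1): for every J ∈ Q_n(k,m−1) there exists I ∈ Q_n(k,m) with D(I) = J. -/
open MvPolynomial

/-- `D` maps `Q_n(k,m)` onto `Q_n(k,m-1)`. -/
lemma Derivation.sum_apply' {R A M : Type*} [CommSemiring R] [CommSemiring A] [Algebra R A]
    [AddCommMonoid M] [Module R M] [Module A M] {ι : Type*} (s : Finset ι)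
    (f : ι → Derivation R A M) (a : A) : (∑ i ∈ s, f i) a = ∑ i ∈ s, f i a := by
  induction s using Finset.cons_induction with
  | empty => simp
  | cons i s hi ih => simp [Finset.sum_cons, ih]

noncomputable def Dder (n : ℕ) :
    Derivation ℚ (MvPolynomial (Fin (n+1)) ℚ) (MvPolynomial (Fin (n+1)) ℚ) :=
  ∑ i : Fin n, (C ((i : ℚ) + 1) * X i.castSucc) • pderiv i.succ


lemma Dop_apply (n : ℕ) (p : MvPolynomial (Fin (n+1)) ℚ) : Dop n p = Dder n p := by
  simp [Dop, Dder, Derivation.sum_apply', smul_eq_C_mul, mul_assoc, Derivation.smul_apply,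
    smul_eq_mul]

noncomputable def Δder (n : ℕ) :
    Derivation ℚ (MvPolynomial (Fin (n+1)) ℚ) (MvPolynomial (Fin (n+1)) ℚ) :=
  ∑ i : Fin n, (C ((n : ℚ) - (i : ℚ)) * X i.succ) • pderiv i.castSucc


lemma Δop_apply (n : ℕ) (p : MvPolynomial (Fin (n+1)) ℚ) : Δop n p = Δder n p := by
  simp [Δop, Δder, Derivation.sum_apply', smul_eq_C_mul, mul_assoc, Derivation.smul_apply,
    smul_eq_mul]

lemma Dder_X' (n : ℕ) (j0 : ℕ) (h : j0 < n) :
    Dder n (X (⟨j0 + 1, by omega⟩ : Fin (n+1))) = ((j0 : ℚ) + 1) • X (⟨j0, by omega⟩ : Fin (n+1)) := by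
  rw [Dder, Derivation.sum_apply']
  rw [Finset.sum_eq_single (⟨j0, h⟩ : Fin n)]
  · have hsucc : (⟨j0, h⟩ : Fin n).succ = (⟨j0 + 1, by omega⟩ : Fin (n+1)) := rfl
    have hcast : (⟨j0, h⟩ : Fin n).castSucc = (⟨j0, by omega⟩ : Fin (n+1)) := rfl
    rw [Derivation.smul_apply, hsucc, pderiv_X_self, hcast, smul_eq_mul, mul_one, smul_eq_C_mul]
  · intro i _ hi
    have hne : (⟨j0 + 1, by omega⟩ : Fin (n+1)) ≠ i.succ := by
      intro hh; apply hi
      have := congrArg Fin.val hh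
      apply Fin.ext; simp only [Fin.val_succ, Fin.val_mk] at this ⊢; omega
    rw [Derivation.smul_apply, pderiv_X_of_ne hne, smul_zero]
  · simp

lemma Dder_X0 (n : ℕ) (j : Fin (n+1)) (hj : (j : ℕ) = 0) : Dder n (X j) = 0 := by
  rw [Dder, Derivation.sum_apply']
  apply Finset.sum_eq_zero
  intro i _
  rw [Derivation.smul_apply, pderiv_X_of_ne, smul_zero]
  intro hh
  have := congrArg Fin.val hh
  simp [hj] at this

lemma Δder_X' (n : ℕ) (j0 : ℕ) (h : j0 < n) :
    Δder n (X (⟨j0, by omega⟩ : Fin (n+1))) =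
      ((n : ℚ) - (j0 : ℚ)) • X (⟨j0 + 1, by omega⟩ : Fin (n+1)) := by
  rw [Δder, Derivation.sum_apply']
  rw [Finset.sum_eq_single (⟨j0, h⟩ : Fin n)]
  · have hsucc : (⟨j0, h⟩ : Fin n).succ = (⟨j0 + 1, by omega⟩ : Fin (n+1)) := rfl
    have hcast : (⟨j0, h⟩ : Fin n).castSucc = (⟨j0, by omega⟩ : Fin (n+1)) := rfl
    rw [Derivation.smul_apply, hcast, pderiv_X_self, hsucc, smul_eq_mul, mul_one, smul_eq_C_mul]
  · intro i _ hi
    have hne : (⟨j0, by omega⟩ : Fin (n+1)) ≠ i.castSucc := by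
      intro hh; apply hi
      have := congrArg Fin.val hh
      apply Fin.ext; simp only [Fin.coe_castSucc, Fin.val_mk] at this ⊢; omega
    rw [Derivation.smul_apply, pderiv_X_of_ne hne, smul_zero]
  · simp

lemma Δder_Xn (n : ℕ) (j : Fin (n+1)) (hj : (j : ℕ) = n) : Δder n (X j) = 0 := by
  rw [Δder, Derivation.sum_apply']
  apply Finset.sum_eq_zero
  intro i _
  rw [Derivation.smul_apply, pderiv_X_of_ne, smul_zero]
  intro hh
  have := congrArg Fin.val hh
  simp [hj] at this
  omega

noncomputable def Eder (n : ℕ) :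
    Derivation ℚ (MvPolynomial (Fin (n+1)) ℚ) (MvPolynomial (Fin (n+1)) ℚ) :=
  ∑ j : Fin (n+1), (C ((n : ℚ) - 2 * ((j : ℕ) : ℚ)) * X j) • pderiv j

lemma Eder_X (n : ℕ) (j : Fin (n+1)) :
    Eder n (X j) = ((n : ℚ) - 2 * ((j : ℕ) : ℚ)) • X j := by
  rw [Eder, Derivation.sum_apply']
  rw [Finset.sum_eq_single j]
  · rw [Derivation.smul_apply, pderiv_X_self, smul_eq_mul, mul_one, smul_eq_C_mul]
  · intro i _ hi
    rw [Derivation.smul_apply, pderiv_X_of_ne (Ne.symm hi), smul_zero]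
  · simp

lemma commDΔ (n : ℕ) : ⁅Dder n, Δder n⁆ = Eder n := by
  apply MvPolynomial.derivation_ext
  intro j
  rw [Derivation.commutator_apply, Eder_X]
  obtain ⟨j0, hj0⟩ := j
  by_cases hn : j0 = n
  · rw [Δder_Xn n _ hn, map_zero, zero_sub]
    by_cases h0 : j0 = 0
    · rw [Dder_X0 n _ h0, map_zero, neg_zero]
      have : (n : ℚ) - 2 * ((j0 : ℕ) : ℚ) = 0 := by
        subst hn; rw [h0]; norm_num
      rw [this, zero_smul]
    · obtain ⟨i, rfl⟩ : ∃ i, j0 = i + 1 := ⟨j0 - 1, by omega⟩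
      rw [Dder_X' n i (by omega), Derivation.map_smul, Δder_X' n i (by omega), smul_smul,
        ← neg_smul]
      congr 1
      have : (n : ℚ) = (i : ℚ) + 1 := by exact_mod_cast congrArg (Nat.cast : ℕ → ℚ) hn.symm
      rw [this]; push_cast; ring
  · rw [show (⟨j0, hj0⟩ : Fin (n+1)) = (⟨j0, by omega⟩ : Fin (n+1)) from rfl,
      Δder_X' n j0 (by omega), Derivation.map_smul, Dder_X' n j0 (by omega), smul_smul]
    by_cases h0 : j0 = 0
    · subst h0
      rw [Dder_X0 n _ rfl, map_zero, sub_zero]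
      congr 1; push_cast; ring
    · obtain ⟨i, rfl⟩ : ∃ i, j0 = i + 1 := ⟨j0 - 1, by omega⟩
      rw [Dder_X' n i (by omega), Derivation.map_smul, Δder_X' n i (by omega), smul_smul,
        ← sub_smul]
      congr 1
      push_cast; ring

lemma sub_add_single_eq {n : ℕ} (ν : Fin (n+1) →₀ ℕ) (j : Fin (n+1)) (h : ν j ≠ 0) :
    ν - Finsupp.single j 1 + Finsupp.single j 1 = ν := by
  ext k
  simp only [Finsupp.add_apply, Finsupp.tsub_apply, Finsupp.single_apply]
  split_ifs with hk
  · subst hk; omega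
  · omega

lemma term_formula {n : ℕ} (a : ℚ) (b j : Fin (n+1)) (ν : Fin (n+1) →₀ ℕ) :
    ((C a * X b) • pderiv j) (monomial ν (1:ℚ)) =
      (a * ((ν j : ℕ) : ℚ)) • monomial (ν - Finsupp.single j 1 + Finsupp.single b 1) 1 := by
  rw [Derivation.smul_apply, smul_eq_mul, pderiv_monomial, one_mul, mul_assoc,
    X, monomial_mul, C_mul_monomial, smul_monomial, smul_eq_mul, mul_one,
    add_comm (ν - Finsupp.single j 1) (Finsupp.single b 1), one_mul]

lemma Eder_monomial (n : ℕ) (ν : Fin (n+1) →₀ ℕ) :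
    Eder n (monomial ν (1:ℚ)) =
      (((n * ∑ i : Fin (n+1), ν i : ℕ) : ℚ) -
        2 * ((∑ i : Fin (n+1), (i : ℕ) * ν i : ℕ) : ℚ)) • monomial ν 1 := by
  rw [Eder, Derivation.sum_apply']
  have step : ∀ j : Fin (n+1),
      ((C ((n : ℚ) - 2 * ((j : ℕ) : ℚ)) * X j) • pderiv j) (monomial ν (1:ℚ)) =
        ((((n : ℚ) - 2 * ((j : ℕ) : ℚ)) * ((ν j : ℕ) : ℚ))) • monomial ν 1 := by
    intro j
    rw [term_formula]
    by_cases hz : ν j = 0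
    · simp [hz]
    · rw [sub_add_single_eq ν j hz]
  rw [Finset.sum_congr rfl (fun j _ => step j), ← Finset.sum_smul]
  congr 1
  push_cast
  simp only [Finset.mul_sum]
  rw [← Finset.sum_sub_distrib]
  exact Finset.sum_congr rfl (fun j _ => by ring)


lemma monomial_mem_Q {n k w : ℕ} {ν : Fin (n+1) →₀ ℕ} (hd : (∑ i : Fin (n+1), ν i) = k)
    (hw : (∑ i : Fin (n+1), (i : ℕ) * ν i) = w) : monomial ν (1:ℚ) ∈ Qspace n k w :=
  Submodule.subset_span ⟨ν, hd, hw, rfl⟩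

lemma comm_on_Q (n k w : ℕ) {v : MvPolynomial (Fin (n+1)) ℚ} (hv : v ∈ Qspace n k w) :
    Dop n (Δop n v) - Δop n (Dop n v) = (((n * k : ℕ) : ℚ) - 2 * ((w : ℕ) : ℚ)) • v := by
  induction hv using Submodule.span_induction with
  | mem p hp =>
    obtain ⟨ν, hd, hw, rfl⟩ := hp
    rw [Δop_apply, Dop_apply, Dop_apply, Δop_apply]
    have h1 : Dder n (Δder n (monomial ν (1:ℚ))) - Δder n (Dder n (monomial ν 1)) =
        Eder n (monomial ν 1) := by
      rw [← Derivation.commutator_apply, commDΔ]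
    rw [h1, Eder_monomial, hd, hw]
  | zero => simp
  | add x y hx hy ihx ihy => rw [map_add, map_add, map_add, map_add, smul_add, ← ihx, ← ihy]; abel
  | smul a x hx ih =>
    rw [map_smul, map_smul, map_smul, map_smul, ← smul_sub, ih, smul_comm]

lemma Dop_monomial (n : ℕ) (ν : Fin (n+1) →₀ ℕ) :
    Dop n (monomial ν (1:ℚ)) = ∑ i : Fin n,
      (((i : ℚ) + 1) * ((ν i.succ : ℕ) : ℚ)) •
        monomial (ν - Finsupp.single i.succ 1 + Finsupp.single i.castSucc 1) 1 := by
  rw [Dop_apply, Dder, Derivation.sum_apply']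
  exact Finset.sum_congr rfl (fun i _ => term_formula _ _ _ _)

lemma Δop_monomial (n : ℕ) (ν : Fin (n+1) →₀ ℕ) :
    Δop n (monomial ν (1:ℚ)) = ∑ i : Fin n,
      (((n : ℚ) - (i : ℚ)) * ((ν i.castSucc : ℕ) : ℚ)) •
        monomial (ν - Finsupp.single i.castSucc 1 + Finsupp.single i.succ 1) 1 := by
  rw [Δop_apply, Δder, Derivation.sum_apply']
  exact Finset.sum_congr rfl (fun i _ => term_formula _ _ _ _)

lemma shift_sums {n : ℕ} (ν : Fin (n+1) →₀ ℕ) (a b : Fin (n+1)) (ha : ν a ≠ 0)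
    (g : Fin (n+1) → ℕ) :
    (∑ i : Fin (n+1), g i * ((ν - Finsupp.single a 1 + Finsupp.single b 1 : Fin (n+1) →₀ ℕ) i)) + g a =
      (∑ i : Fin (n+1), g i * ν i) + g b := by
  have hpt : ∀ i : Fin (n+1),
      g i * ((ν - Finsupp.single a 1 + Finsupp.single b 1 : Fin (n+1) →₀ ℕ) i) + (if a = i then g i else 0) =
        g i * ν i + (if b = i then g i else 0) := by
    intro i
    simp only [Finsupp.add_apply, Finsupp.tsub_apply, Finsupp.single_apply]
    rcases eq_or_ne a i with rfl | hai
    · obtain ⟨c, hc⟩ : ∃ c, ν a = c + 1 := ⟨ν a - 1, by omega⟩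
      rcases eq_or_ne b a with rfl | hba
      · simp [hc, Nat.mul_succ]
      · simp [hba, hc, Nat.mul_succ]
    · rcases eq_or_ne b i with rfl | hbi
      · simp [hai, Nat.mul_succ]
      · simp [hai, hbi]
  have hsum := Finset.sum_congr rfl (fun i (_ : i ∈ Finset.univ) => hpt i)
  rw [Finset.sum_add_distrib, Finset.sum_add_distrib, Finset.sum_ite_eq Finset.univ a g,
    Finset.sum_ite_eq Finset.univ b g, if_pos (Finset.mem_univ a),
    if_pos (Finset.mem_univ b)] at hsum
  exact hsum

lemma Dop_mem (n k w : ℕ) {v : MvPolynomial (Fin (n+1)) ℚ} (hv : v ∈ Qspace n k (w+1)) :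
    Dop n v ∈ Qspace n k w := by
  induction hv using Submodule.span_induction with
  | mem p hp =>
    obtain ⟨ν, hd, hw, rfl⟩ := hp
    rw [Dop_monomial]
    apply Submodule.sum_mem
    intro i _
    by_cases hz : ν i.succ = 0
    · simp [hz]
    · apply Submodule.smul_mem
      apply monomial_mem_Q
      · have := shift_sums ν i.succ i.castSucc hz (fun _ => 1)
        simp only [one_mul] at this ⊢
        omega
      · have := shift_sums ν i.succ i.castSucc hz (fun j => (j : ℕ))
        simp only [Fin.val_succ, Fin.coe_castSucc] at this
        omega
  | zero => simp
  | add x y hx hy ihx ihy => rw [map_add]; exact Submodule.add_mem _ ihx ihy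
  | smul a x hx ih => rw [map_smul]; exact Submodule.smul_mem _ a ih

lemma Δop_mem (n k w : ℕ) {v : MvPolynomial (Fin (n+1)) ℚ} (hv : v ∈ Qspace n k w) :
    Δop n v ∈ Qspace n k (w+1) := by
  induction hv using Submodule.span_induction with
  | mem p hp =>
    obtain ⟨ν, hd, hw, rfl⟩ := hp
    rw [Δop_monomial]
    apply Submodule.sum_mem
    intro i _
    by_cases hz : ν i.castSucc = 0
    · simp [hz]
    · apply Submodule.smul_mem
      apply monomial_mem_Q
      · have := shift_sums ν i.castSucc i.succ hz (fun _ => 1)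
        simp only [one_mul] at this ⊢
        omega
      · have := shift_sums ν i.castSucc i.succ hz (fun j => (j : ℕ))
        simp only [Fin.val_succ, Fin.coe_castSucc] at this
        omega
  | zero => simp
  | add x y hx hy ihx ihy => rw [map_add]; exact Submodule.add_mem _ ihx ihy
  | smul a x hx ih => rw [map_smul]; exact Submodule.smul_mem _ a ih

lemma Dop_zero (n k : ℕ) {v : MvPolynomial (Fin (n+1)) ℚ} (hv : v ∈ Qspace n k 0) :
    Dop n v = 0 := by
  induction hv using Submodule.span_induction with
  | mem p hp =>
    obtain ⟨ν, hd, hw, rfl⟩ := hp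
    rw [Dop_monomial]
    apply Finset.sum_eq_zero
    intro i _
    have hz : ν i.succ = 0 := by
      have h1 := (Finset.sum_eq_zero_iff (f := fun j : Fin (n+1) => (j : ℕ) * ν j)
        (s := Finset.univ)).mp hw
      have := h1 i.succ (Finset.mem_univ _)
      simp only [Fin.val_succ] at this
      rcases Nat.mul_eq_zero.mp this with h | h
      · omega
      · exact h
    simp [hz]
  | zero => simp
  | add x y hx hy ihx ihy => rw [map_add, ihx, ihy, add_zero]
  | smul a x hx ih => rw [map_smul, ih, smul_zero]

lemma Δpow_mem (n k : ℕ) (r : ℕ) :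
    ∀ (u : ℕ) (v : MvPolynomial (Fin (n+1)) ℚ), v ∈ Qspace n k u →
      (Δop n ^ r) v ∈ Qspace n k (u + r) := by
  induction r with
  | zero => intro u v hv; simpa using hv
  | succ r ih =>
    intro u v hv
    rw [pow_succ, Module.End.mul_apply]
    have := ih (u+1) (Δop n v) (Δop_mem n k u hv)
    rwa [show u + 1 + r = u + (r+1) by omega] at this

lemma comm_pow (n k : ℕ) (r : ℕ) :
    ∀ (u : ℕ) (v : MvPolynomial (Fin (n+1)) ℚ), v ∈ Qspace n k u →
      Dop n ((Δop n ^ (r+1)) v) = (Δop n ^ (r+1)) (Dop n v) +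
        (((r : ℚ) + 1) * (((n*k : ℕ) : ℚ) - 2*(u : ℚ) - (r : ℚ))) • (Δop n ^ r) v := by
  induction r with
  | zero =>
    intro u v hv
    rw [pow_one, pow_zero, Module.End.one_apply]
    have := comm_on_Q n k u hv
    rw [sub_eq_iff_eq_add] at this
    rw [this, show (((0:ℕ):ℚ) + 1) * (((n*k : ℕ) : ℚ) - 2*(u : ℚ) - ((0:ℕ) : ℚ)) =
      (((n*k : ℕ) : ℚ) - 2*(u : ℚ)) from by push_cast; ring]
    exact add_comm _ _
  | succ r ih =>
    intro u v hv
    rw [pow_succ' (Δop n) (r+1), Module.End.mul_apply]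
    have hw : (Δop n ^ (r+1)) v ∈ Qspace n k (u + (r+1)) := Δpow_mem n k (r+1) u v hv
    have h1 := comm_on_Q n k (u + (r+1)) hw
    rw [sub_eq_iff_eq_add] at h1
    rw [h1, ih u v hv, map_add, map_smul, ← Module.End.mul_apply (Δop n) (Δop n ^ (r+1)),
      ← pow_succ' (Δop n) (r+1), ← Module.End.mul_apply (Δop n) (Δop n ^ r),
      ← pow_succ' (Δop n) r]
    rw [show ((((r+1) : ℕ) : ℚ) + 1) * (((n*k : ℕ) : ℚ) - 2*(u : ℚ) - ((r+1 : ℕ) : ℚ)) =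
      (((n*k : ℕ) : ℚ) - 2 * (((u + (r + 1)) : ℕ) : ℚ)) + ((r : ℚ) + 1) * (((n*k : ℕ) : ℚ) - 2*(u : ℚ) - (r : ℚ))
      from by push_cast; ring, add_smul]
    abel

/-- STATEMENT 7 proof -/
theorem D_surjective_on_Q (n k m : ℕ) (hm : 1 ≤ m) (h : 2 * m ≤ n * k) :
    ∀ J ∈ Qspace n k (m - 1), ∃ I ∈ Qspace n k m, Dop n I = J := by
  obtain ⟨w, rfl⟩ : ∃ w, m = w + 1 := ⟨m - 1, by omega⟩
  simp only [Nat.add_sub_cancel]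
  intro J hJ
  set A : ℚ := ((n*k : ℕ) : ℚ) - 2*(w:ℚ) with hA
  have hA2 : (2:ℚ) ≤ A := by
    have h2 : ((2*(w+1) : ℕ) : ℚ) ≤ ((n*k : ℕ) : ℚ) := by exact_mod_cast h
    push_cast at h2
    rw [hA]; push_cast; linarith
  set b : ℕ → ℚ := fun r => ((r:ℚ)+1) * (A + r) with hbdef
  have hb : ∀ r, b r ≠ 0 := by
    intro r
    have h1 : (0:ℚ) < (r:ℚ)+1 := by positivity
    have h2 : (0:ℚ) < A + r := by
      have : (0:ℚ) ≤ (r:ℚ) := Nat.cast_nonneg r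
      linarith
    exact ne_of_gt (mul_pos h1 h2)
  set c : ℕ → ℚ := fun r => Nat.rec ((b 0)⁻¹) (fun r cr => -cr / b (r+1)) r with hcdef
  have hc0 : c 0 = (b 0)⁻¹ := rfl
  have hcs : ∀ r, c (r+1) = -(c r) / b (r+1) := fun r => rfl
  set Jr : ℕ → MvPolynomial (Fin (n+1)) ℚ := fun r => ((Dop n) ^ r) J with hJrdef
  have hJrs : ∀ r, Jr (r+1) = Dop n (Jr r) := by
    intro r
    show ((Dop n) ^ (r+1)) J = Dop n (((Dop n) ^ r) J)
    rw [pow_succ' (Dop n) r, Module.End.mul_apply]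
  have hJrmem : ∀ r, Jr r ∈ Qspace n k (w - r) := by
    intro r
    induction r with
    | zero => simpa [hJrdef] using hJ
    | succ r ih =>
      rw [hJrs r]
      rcases le_or_gt (r+1) w with hle | hlt
      · have : w - r = (w - (r+1)) + 1 := by omega
        rw [this] at ih
        exact Dop_mem n k (w - (r+1)) ih
      · have h0 : w - r = 0 := by omega
        rw [h0] at ih
        have : Dop n (Jr r) = 0 := Dop_zero n k ih
        rw [this]
        exact Submodule.zero_mem _
  have hJtop : Jr (w+1) = 0 := by
    rw [hJrs w]
    have := hJrmem w
    rw [Nat.sub_self] at this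
    exact Dop_zero n k this
  set t : ℕ → MvPolynomial (Fin (n+1)) ℚ := fun r => (Δop n ^ r) (Jr r) with htdef
  have key : ∀ r ≤ w, Dop n ((Δop n ^ (r+1)) (Jr r)) = t (r+1) + b r • t r := by
    intro r hr
    have hcast : ((w - r : ℕ) : ℚ) = (w : ℚ) - (r : ℚ) := by
      push_cast [Nat.cast_sub hr]; ring
    have := comm_pow n k r (w - r) (Jr r) (hJrmem r)
    rw [this, hcast, ← hJrs r]
    congr 2
    rw [hbdef, hA]
    ring
  -- telescoping
  have tele : ∀ N : ℕ, (∑ r ∈ Finset.range (N+1), c r • (t (r+1) + b r • t r)) =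
      t 0 + c N • t (N+1) := by
    intro N
    induction N with
    | zero =>
      rw [Finset.sum_range_one, smul_add, smul_smul, hc0, inv_mul_cancel₀ (hb 0), one_smul]
      exact add_comm _ _
    | succ N ih =>
      rw [Finset.sum_range_succ, ih, smul_add, smul_smul,
        show c (N+1) * b (N+1) = -(c N) from by rw [hcs N, div_mul_cancel₀ _ (hb (N+1))],
        neg_smul]
      abel
  refine ⟨∑ r ∈ Finset.range (w+1), c r • (Δop n ^ (r+1)) (Jr r), ?_, ?_⟩
  · apply Submodule.sum_mem
    intro r hr
    apply Submodule.smul_mem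
    have := Δpow_mem n k (r+1) (w - r) (Jr r) (hJrmem r)
    rwa [show w - r + (r+1) = w + 1 from by
      have := Finset.mem_range.mp hr; omega] at this
  · rw [map_sum]
    have : ∀ r ∈ Finset.range (w+1), Dop n (c r • (Δop n ^ (r+1)) (Jr r)) =
        c r • (t (r+1) + b r • t r) := by
      intro r hr
      rw [map_smul, key r (by have := Finset.mem_range.mp hr; omega)]
    rw [Finset.sum_congr rfl this, tele w]
    have ht0 : t 0 = J := by
      rw [htdef]
      simp [hJrdef]
    have httop : t (w+1) = 0 := by
      rw [htdef]
      simp only [hJtop, map_zero]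
    rw [ht0, httop, smul_zero, add_zero]
end
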